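/- For any real p, the limit as n → ∞ of ln(n) · (1/2 − (ln n)^p / (2 (ln 2n)^p)) equals (p ln 2)/2. -/

import Mathlib

open Filter Topology

lemma exp_slope_aux : Filter.Tendsto (fun y : ℝ => (Real.exp y - 1) / y)
    (𝓝[≠] (0:ℝ)) (𝓝 1) := by
  have h := hasDerivAt_iff_tendsto_slope.mp (Real.hasDerivAt_exp 0)
  simp only [Real.exp_zero] at h
  refine h.congr' ?_
  filter_upwards [self_mem_nhdsWithin] with y hy
  simp [slope_def_field]

lemma main_aux (p : ℝ) (hp : p ≠ 0) :
    Filter.Tendsto (fun x : ℝ => x / 2 *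
      (1 - Real.exp (p * Real.log (x / (x + Real.log 2)))))
      Filter.atTop (𝓝 (p * Real.log 2 / 2)) := by
  set c := Real.log 2 with hcdef
  have hc : 0 < c := Real.log_pos one_lt_two
  set t : ℝ → ℝ := fun x => Real.log (x / (x + c)) with ht
  -- x * t x → -c
  have hxt : Filter.Tendsto (fun x => x * t x) Filter.atTop (𝓝 (-c)) := by
    have h1 : Filter.Tendsto (fun x : ℝ => -(x * Real.log (1 + c / x)))
        Filter.atTop (𝓝 (-c)) := (Real.tendsto_mul_log_one_add_div_atTop c).neg
    refine h1.congr' ?_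
    filter_upwards [eventually_gt_atTop (0:ℝ)] with x hx
    have hxc : 0 < x + c := by linarith
    have : (1 : ℝ) + c / x = (x + c) / x := by field_simp
    rw [this, ht]
    simp only
    rw [Real.log_div hx.ne' hxc.ne', Real.log_div hxc.ne' hx.ne']
    ring
  -- t → 0
  have ht0 : Filter.Tendsto t Filter.atTop (𝓝 0) := by
    have h1 : Filter.Tendsto (fun x => (x * t x) * x⁻¹) Filter.atTop (𝓝 (-c * 0)) :=
      hxt.mul tendsto_inv_atTop_zero
    rw [mul_zero] at h1
    refine h1.congr' ?_
    filter_upwards [eventually_gt_atTop (0:ℝ)] with x hx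
    field_simp
  -- t x ≠ 0 eventually
  have htne : ∀ᶠ x : ℝ in Filter.atTop, t x ≠ 0 := by
    filter_upwards [eventually_gt_atTop (0:ℝ)] with x hx
    have hxc : 0 < x + c := by linarith
    have : x / (x + c) < 1 := (div_lt_one hxc).mpr (by linarith)
    exact ne_of_lt (Real.log_neg (div_pos hx hxc) this)
  -- p * t x → 0 within ≠ 0
  have hpt : Filter.Tendsto (fun x => p * t x) Filter.atTop (𝓝[≠] 0) := by
    rw [tendsto_nhdsWithin_iff]
    constructor
    · simpa using (tendsto_const_nhds.mul ht0 :
        Filter.Tendsto (fun x => p * t x) Filter.atTop (𝓝 (p * 0)))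
    · filter_upwards [htne] with x hx
      exact mul_ne_zero hp hx
  have hratio : Filter.Tendsto
      (fun x => (Real.exp (p * t x) - 1) / (p * t x)) Filter.atTop (𝓝 1) :=
    exp_slope_aux.comp hpt
  -- assemble
  have hmain : Filter.Tendsto
      (fun x => -((Real.exp (p * t x) - 1) / (p * t x)) * (p * (x * t x)) / 2)
      Filter.atTop (𝓝 (p * c / 2)) := by
    have h5 : Filter.Tendsto
        (fun x => -((Real.exp (p * t x) - 1) / (p * t x)) * (p * (x * t x)) / 2)
        Filter.atTop (𝓝 ((-1) * (p * -c) / 2)) :=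
      (hratio.neg.mul ((tendsto_const_nhds (x := p)).mul hxt)).div_const 2
    have heq : (-1 : ℝ) * (p * -c) / 2 = p * c / 2 := by ring
    rw [heq] at h5
    exact h5
  refine hmain.congr' ?_
  filter_upwards [htne] with x hx
  have hptx : p * t x ≠ 0 := mul_ne_zero hp hx
  field_simp
  rw [show Real.log (x / (x + c)) = t x from rfl]
  ring

theorem log_ratio_limit (p : ℝ) :
    Filter.Tendsto
      (fun n : ℕ => Real.log n *
        (1 / 2 - (Real.log n) ^ p / (2 * (Real.log (2 * n)) ^ p)))
      Filter.atTop (nhds (p * Real.log 2 / 2)) := by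
  rcases eq_or_ne p 0 with rfl | hp
  · simp only [Real.rpow_zero, zero_mul, zero_div]
    simpa using (tendsto_const_nhds :
      Filter.Tendsto (fun _ : ℕ => (0:ℝ)) Filter.atTop (𝓝 0))
  · have hlog : Filter.Tendsto (fun n : ℕ => Real.log n) Filter.atTop Filter.atTop :=
      Real.tendsto_log_atTop.comp tendsto_natCast_atTop_atTop
    have h := (main_aux p hp).comp hlog
    refine h.congr' ?_
    filter_upwards [eventually_ge_atTop 2] with n hn
    have hn0 : (0:ℝ) < (n:ℝ) := by
      have : (2:ℝ) ≤ (n:ℝ) := by exact_mod_cast hn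
      linarith
    have hL : 0 < Real.log n := Real.log_pos (by exact_mod_cast hn.trans_lt' one_lt_two)
    have hc : 0 < Real.log 2 := Real.log_pos one_lt_two
    have hLc : 0 < Real.log n + Real.log 2 := by linarith
    have hlog2n : Real.log (2 * (n:ℝ)) = Real.log n + Real.log 2 := by
      rw [Real.log_mul two_ne_zero hn0.ne']; ring
    have hE : (Real.log n) ^ p / (Real.log n + Real.log 2) ^ p =
        Real.exp (p * Real.log (Real.log n / (Real.log n + Real.log 2))) := by
      rw [← Real.div_rpow hL.le hLc.le, Real.rpow_def_of_pos (div_pos hL hLc), mul_comm]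
    have h2 : (Real.log ↑n + Real.log 2) ^ p ≠ 0 := (Real.rpow_pos_of_pos hLc p).ne'
    simp only [Function.comp_apply]
    rw [hlog2n, ← hE]
    field_simp
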